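/- Let n be a natural number, U a subset of {1,…,n} with L = |U| + 1, and let Γ be the n×n real diagonal matrix with diagonal entries Γ_r satisfying: Γ_r = 1 for every r ∉ U, while the entries {Γ_r : r ∈ U} are pairwise distinct, nonzero, and different from 1. Let W ∈ ℝⁿ be the all-ones vector. Then every vector x ∈ ℝⁿ that is constant on the complement of U (i.e. there is c ∈ ℝ with x_r = c for all r ∉ U) lies in the real linear span of { Γ^j W : 1 ≤ j ≤ L }. -/
import Mathlib


/-- Algebraic core of Lemma 5: if `Γ = diag g` with `g r = 1` off `U` and the
values `{g r : r ∈ U}` pairwise distinct, nonzero and ≠ 1, then every vector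
constant on the complement of `U` lies in the span of `{Γ^j W : 1 ≤ j ≤ L}`,
where `W` is the all-ones vector and `L = |U| + 1`. -/
theorem stmt_14 (n : ℕ) (U : Finset (Fin n)) (L : ℕ) (hL : L = U.card + 1)
    (g : Fin n → ℝ)
    (hg1 : ∀ r ∉ U, g r = 1)
    (hgdist : ∀ r ∈ U, ∀ s ∈ U, r ≠ s → g r ≠ g s)
    (hg0 : ∀ r ∈ U, g r ≠ 0)
    (hgne1 : ∀ r ∈ U, g r ≠ 1)
    (W : Fin n → ℝ) (hW : W = fun _ => (1 : ℝ)) :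
    ∀ x : Fin n → ℝ, (∃ c : ℝ, ∀ r ∉ U, x r = c) →
      x ∈ Submodule.span ℝ
        {v : Fin n → ℝ | ∃ j : ℕ, 1 ≤ j ∧ j ≤ L ∧
          v = ((Matrix.diagonal g) ^ j).mulVec W} := by
  rintro x ⟨c, hc⟩
  classical
  -- node set
  set s : Finset ℝ := insert (1 : ℝ) (U.image g) with hs
  have hinjOn : Set.InjOn g U := fun a ha b hb hab => by
    by_contra h; exact hgdist a ha b hb h hab
  have h1notin : (1 : ℝ) ∉ U.image g := by
    simp only [Finset.mem_image, not_exists]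
    rintro r ⟨hr, hgr⟩
    exact hgne1 r hr hgr
  have hcard : s.card = L := by
    rw [hs, Finset.card_insert_of_notMem h1notin,
      Finset.card_image_of_injOn hinjOn, hL, Nat.add_comm]
  -- values
  set val : ℝ → ℝ := fun t => if h : ∃ r, r ∈ U ∧ g r = t then x h.choose / g h.choose else c
    with hval
  set q : Polynomial ℝ := Lagrange.interpolate s id val with hq
  set p : Polynomial ℝ := Polynomial.X * q with hp
  have hids : Set.InjOn (id : ℝ → ℝ) s := Function.injective_id.injOn
  have hval1 : val 1 = c := by
    rw [hval]
    simp only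
    rw [dif_neg]
    rintro ⟨r, hr, hgr⟩
    exact hgne1 r hr hgr
  have hvalg : ∀ r ∈ U, val (g r) = x r / g r := by
    intro r hr
    rw [hval]
    simp only
    have h : ∃ r', r' ∈ U ∧ g r' = g r := ⟨r, hr, rfl⟩
    rw [dif_pos h]
    have := h.choose_spec
    have : h.choose = r := hinjOn this.1 hr this.2
    rw [this]
  -- p evaluates to x at nodes
  have hevalx : ∀ r : Fin n, p.eval (g r) = x r := by
    intro r
    by_cases hr : r ∈ U
    · have hmem : g r ∈ s := by
        rw [hs]; exact Finset.mem_insert_of_mem (Finset.mem_image_of_mem g hr)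
      have := Lagrange.eval_interpolate_at_node val hids hmem
      rw [id_eq] at this
      rw [hp, Polynomial.eval_mul, Polynomial.eval_X, hq, this, hvalg r hr,
        mul_div_cancel₀ _ (hg0 r hr)]
    · have hmem : (1:ℝ) ∈ s := by rw [hs]; exact Finset.mem_insert_self _ _
      have := Lagrange.eval_interpolate_at_node val hids hmem
      rw [id_eq] at this
      rw [hg1 r hr, hp, Polynomial.eval_mul, Polynomial.eval_X, hq, this, hval1,
        one_mul, hc r hr]
  -- degree bound
  have hdeg : p.natDegree < L + 1 := by
    rcases eq_or_ne q 0 with h0 | h0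
    · rw [hp, h0, mul_zero]; simp
    · have hdq : q.degree < L := by rw [hq, ← hcard]; exact Lagrange.degree_interpolate_lt _ hids
      have : p.degree = 1 + q.degree := by
        rw [hp, Polynomial.degree_mul, Polynomial.degree_X]
      have hdp : p.degree < (L + 1 : ℕ) := by
        rw [this]
        have h1 : 1 + q.degree < 1 + (L : WithBot ℕ) :=
          WithBot.add_lt_add_left (by simp) hdq
        have h2 : (1 : WithBot ℕ) + (L : WithBot ℕ) = ((L + 1 : ℕ) : WithBot ℕ) := by
          push_cast; ring
        rwa [h2] at h1
      exact (Polynomial.natDegree_lt_iff_degree_lt (mul_ne_zero Polynomial.X_ne_zero h0)).mpr hdp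
  have hcoeff0 : p.coeff 0 = 0 := by
    rw [hp, Polynomial.mul_coeff_zero, Polynomial.coeff_X_zero, zero_mul]
  -- x as a sum
  have hx : x = ∑ j ∈ Finset.Icc 1 L, p.coeff j • (fun r : Fin n => (g r) ^ j) := by
    funext r
    have := Polynomial.eval_eq_sum_range' hdeg (g r)
    rw [← hevalx r, this]
    rw [Finset.sum_apply]
    rw [show Finset.range (L+1) = insert 0 (Finset.Icc 1 L) by
      ext i; simp [Finset.mem_Icc, Nat.lt_succ_iff]; omega]
    rw [Finset.sum_insert (by simp)]
    simp [hcoeff0]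
  rw [hx]
  apply Submodule.sum_mem
  intro j hj
  apply Submodule.smul_mem
  apply Submodule.subset_span
  refine ⟨j, (Finset.mem_Icc.mp hj).1, (Finset.mem_Icc.mp hj).2, ?_⟩
  funext r
  rw [hW, Matrix.diagonal_pow]
  simp [Matrix.mulVec_diagonal]
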